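/- Let G be a finite simple graph and u a vertex. The number of non-induced 3-paths v0-v1-v2-v3 (4 distinct vertices) with u = v1 (second vertex) equals (Σ_{w∈N(u)}(d(w)−1))·(d(u)−1) − 2·T(u), where T(u) is the number of triangles containing u. -/

import Mathlib

open Finset SimpleGraph

section aux
variable {V : Type*} [Fintype V] [DecidableEq V]
  (G : SimpleGraph V) [DecidableRel G.Adj] (u : V)

private lemma fiberA (b : V) (hb : b ∈ G.neighborFinset u) :
    (((Finset.univ ×ˢ Finset.univ ×ˢ Finset.univ : Finset (V × V × V)).filter
      (fun p => G.Adj p.1 u ∧ G.Adj u p.2.1 ∧ G.Adj p.2.1 p.2.2 ∧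
        p.1 ≠ p.2.1 ∧ p.2.2 ≠ u)).filter (fun p => p.2.1 = b)).card
    = (((G.neighborFinset u).erase b) ×ˢ ((G.neighborFinset b).erase u)).card := by
  apply Finset.card_nbij (fun p => (p.1, p.2.2))
  · rintro ⟨a, b', c⟩ hp
    change _ ∈ (_ : Finset (V × V × V)) at hp
    change _ ∈ (_ : Finset (V × V))
    simp only [mem_filter, mem_product, mem_univ, true_and] at hp ⊢
    obtain ⟨⟨h1, h2, h3, h4, h5⟩, rfl⟩ := hp
    simp only [mem_product, mem_erase, mem_neighborFinset]
    exact ⟨⟨h4, G.adj_symm h1⟩, ⟨h5, h3⟩⟩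
  · rintro ⟨a, b', c⟩ hp ⟨a2, b2, c2⟩ hq h
    simp only [mem_coe, mem_filter] at hp hq
    obtain ⟨-, rfl⟩ := hp
    obtain ⟨-, rfl⟩ := hq
    simpa [Prod.ext_iff] using h
  · rintro ⟨a, c⟩ hq
    simp only [coe_product, Set.mem_prod, mem_coe, mem_erase, mem_neighborFinset] at hq
    obtain ⟨⟨hab, hau⟩, ⟨hcu, hbc⟩⟩ := hq
    refine ⟨(a, b, c), ?_, rfl⟩
    simp only [coe_filter, Set.mem_setOf_eq, mem_filter, mem_product, mem_univ, true_and]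
    rw [mem_neighborFinset] at hb
    exact ⟨⟨G.adj_symm hau, hb, hbc, hab, hcu⟩, trivial⟩

private lemma cardB :
    ((Finset.univ ×ˢ Finset.univ ×ˢ Finset.univ : Finset (V × V × V)).filter
      (fun p => (G.Adj p.1 u ∧ G.Adj u p.2.1 ∧ G.Adj p.2.1 p.2.2 ∧
        p.1 ≠ p.2.1 ∧ p.2.2 ≠ u) ∧ p.1 = p.2.2)).card
    = (((G.neighborFinset u) ×ˢ (G.neighborFinset u)).filter
        (fun p => G.Adj p.1 p.2)).card := by
  apply Finset.card_nbij (fun p => (p.2.1, p.1))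
  · rintro ⟨a, b, c⟩ hp
    change _ ∈ (_ : Finset (V × V × V)) at hp
    change _ ∈ (_ : Finset (V × V))
    simp only [mem_filter, mem_product, mem_univ, true_and] at hp ⊢
    obtain ⟨⟨h1, h2, h3, h4, h5⟩, rfl⟩ := hp
    exact ⟨⟨by simpa [mem_neighborFinset] using h2, by simpa [mem_neighborFinset] using G.adj_symm h1⟩, h3⟩
  · rintro ⟨a, b, c⟩ hp ⟨a2, b2, c2⟩ hq h
    simp only [mem_coe, mem_filter] at hp hq
    obtain ⟨-, -, rfl⟩ := hp
    obtain ⟨-, -, rfl⟩ := hq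
    simp only [Prod.ext_iff] at h ⊢
    tauto
  · rintro ⟨b, a⟩ hq
    simp only [coe_filter, mem_product, mem_neighborFinset, Set.mem_setOf_eq] at hq
    obtain ⟨⟨hub, hua⟩, hba⟩ := hq
    refine ⟨(a, b, a), ?_, rfl⟩
    simp only [coe_filter, Set.mem_setOf_eq, mem_filter, mem_product, mem_univ, true_and]
    exact ⟨⟨G.adj_symm hua, hub, hba, hba.ne', hua.ne'⟩, trivial⟩

private lemma cardP :
    (((G.neighborFinset u) ×ˢ (G.neighborFinset u)).filter
        (fun p => G.Adj p.1 p.2)).card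
    = 2 * (((G.neighborFinset u).powersetCard 2).filter
        (fun s => ∀ a ∈ s, ∀ b ∈ s, a ≠ b → G.Adj a b)).card := by
  rw [Finset.card_eq_sum_card_fiberwise
    (f := fun p : V × V => ({p.1, p.2} : Finset V))
    (t := ((G.neighborFinset u).powersetCard 2).filter
        (fun s => ∀ a ∈ s, ∀ b ∈ s, a ≠ b → G.Adj a b))]
  · rw [Finset.sum_congr rfl (fun s hs => ?_), Finset.sum_const, smul_eq_mul, mul_comm]
    -- each fiber has card 2
    simp only [mem_filter, mem_powersetCard] at hs
    obtain ⟨⟨hsub, hcard⟩, hclq⟩ := hs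
    obtain ⟨x, y, hxy, rfl⟩ := Finset.card_eq_two.mp hcard
    have hx : x ∈ G.neighborFinset u := hsub (by simp)
    have hy : y ∈ G.neighborFinset u := hsub (by simp)
    have hadj : G.Adj x y := hclq x (by simp) y (by simp) hxy
    have : Finset.filter (fun p : V × V => ({p.1, p.2} : Finset V) = {x, y})
        (((G.neighborFinset u) ×ˢ (G.neighborFinset u)).filter (fun p => G.Adj p.1 p.2))
        = {(x, y), (y, x)} := by
      ext ⟨a, b⟩
      simp only [mem_filter, mem_product, mem_insert, mem_singleton, Prod.mk.injEq]
      constructor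
      · rintro ⟨⟨⟨ha, hb⟩, hab⟩, hpair⟩
        have ha' : a = x ∨ a = y := by
          have : a ∈ ({x, y} : Finset V) := hpair ▸ (by simp)
          simpa using this
        have hb' : b = x ∨ b = y := by
          have : b ∈ ({x, y} : Finset V) := hpair ▸ (by simp)
          simpa using this
        rcases ha' with rfl | rfl <;> rcases hb' with rfl | rfl
        · exact absurd rfl hab.ne
        · exact Or.inl ⟨rfl, rfl⟩
        · exact Or.inr ⟨rfl, rfl⟩
        · exact absurd rfl hab.ne
      · rintro (⟨rfl, rfl⟩ | ⟨rfl, rfl⟩)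
        · exact ⟨⟨⟨hx, hy⟩, hadj⟩, rfl⟩
        · exact ⟨⟨⟨hy, hx⟩, G.adj_symm hadj⟩, by rw [Finset.pair_comm]⟩
    rw [this, Finset.card_insert_of_notMem (by simp [Prod.ext_iff, hxy]), Finset.card_singleton]
  · rintro ⟨a, b⟩ hp
    change _ ∈ (_ : Finset (V × V)) at hp
    simp only [mem_filter, mem_product] at hp
    obtain ⟨⟨ha, hb⟩, hab⟩ := hp
    change _ ∈ (_ : Finset (Finset V))
    simp only [mem_filter, mem_powersetCard]
    refine ⟨⟨?_, ?_⟩, ?_⟩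
    · intro z hz; simp only [mem_insert, mem_singleton] at hz
      rcases hz with rfl | rfl <;> assumption
    · rw [Finset.card_pair hab.ne]
    · intro p hp q hq hpq
      simp only [mem_insert, mem_singleton] at hp hq
      rcases hp with rfl | rfl <;> rcases hq with rfl | rfl
      · exact absurd rfl hpq
      · exact hab
      · exact G.adj_symm hab
      · exact absurd rfl hpq

end aux

/-- The number of 3-edge paths `v0-v1-v2-v3` (four distinct vertices) with
`u = v1` equals `(Σ_{w∈N(u)}(d(w)−1))·(d(u)−1) − 2·T(u)`. -/
theorem three_path_second_vertex_count {V : Type*} [Fintype V] [DecidableEq V]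
    (G : SimpleGraph V) [DecidableRel G.Adj] (u : V) :
    -- 3-edge paths v0-u-v2-v3 with four distinct vertices
    let DM5 : ℕ :=
      ((Finset.univ ×ˢ Finset.univ ×ˢ Finset.univ : Finset (V × V × V)).filter
        (fun p => G.Adj p.1 u ∧ G.Adj u p.2.1 ∧ G.Adj p.2.1 p.2.2 ∧
          p.1 ≠ p.2.1 ∧ p.1 ≠ p.2.2 ∧ p.2.2 ≠ u)).card
    -- T(u): triangles containing u
    let T : ℕ := (((G.neighborFinset u).powersetCard 2).filter
        (fun s => ∀ a ∈ s, ∀ b ∈ s, a ≠ b → G.Adj a b)).card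
    (DM5 : ℤ) = (∑ w ∈ G.neighborFinset u, ((G.degree w : ℤ) - 1))
        * ((G.degree u : ℤ) - 1) - 2 * (T : ℤ) := by
  intro DM5 T
  set A : Finset (V × V × V) :=
    ((Finset.univ ×ˢ Finset.univ ×ˢ Finset.univ : Finset (V × V × V)).filter
      (fun p => G.Adj p.1 u ∧ G.Adj u p.2.1 ∧ G.Adj p.2.1 p.2.2 ∧
        p.1 ≠ p.2.1 ∧ p.2.2 ≠ u)) with hA
  -- split A by whether p.1 = p.2.2
  have hsplit : DM5 + ((Finset.univ ×ˢ Finset.univ ×ˢ Finset.univ : Finset (V × V × V)).filter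
      (fun p => (G.Adj p.1 u ∧ G.Adj u p.2.1 ∧ G.Adj p.2.1 p.2.2 ∧
        p.1 ≠ p.2.1 ∧ p.2.2 ≠ u) ∧ p.1 = p.2.2)).card = A.card := by
    have h1 := Finset.card_filter_add_card_filter_not
      (s := A) (p := fun p : V × V × V => p.1 = p.2.2)
    rw [hA, Finset.filter_filter, Finset.filter_filter] at h1
    have h2 : DM5 = ((Finset.univ ×ˢ Finset.univ ×ˢ Finset.univ : Finset (V × V × V)).filter
        (fun p => (G.Adj p.1 u ∧ G.Adj u p.2.1 ∧ G.Adj p.2.1 p.2.2 ∧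
          p.1 ≠ p.2.1 ∧ p.2.2 ≠ u) ∧ ¬ p.1 = p.2.2)).card := by
      refine congrArg Finset.card (Finset.filter_congr ?_)
      intro p _
      tauto
    rw [h2, hA]
    omega
  -- count A fiberwise over the middle vertex
  have hAcard : A.card = ∑ b ∈ G.neighborFinset u,
      (G.degree u - 1) * (G.degree b - 1) := by
    rw [Finset.card_eq_sum_card_fiberwise (f := fun p : V × V × V => p.2.1)
      (t := G.neighborFinset u)]
    · refine Finset.sum_congr rfl (fun b hb => ?_)
      rw [hA, fiberA G u b hb, Finset.card_product,
        Finset.card_erase_of_mem hb,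
        Finset.card_erase_of_mem (by rwa [mem_neighborFinset, adj_comm, ← mem_neighborFinset] at hb),
        G.card_neighborFinset_eq_degree, G.card_neighborFinset_eq_degree]
    · rintro ⟨a, b, c⟩ hp
      rw [hA] at hp
      change _ ∈ (_ : Finset (V × V × V)) at hp
      simp only [Finset.mem_filter] at hp
      simpa [mem_neighborFinset] using hp.2.2.1
  have hB := cardB G u
  have hP := cardP G u
  -- now cast to ℤ
  have hDM5 : (DM5 : ℤ) = (A.card : ℤ) - 2 * (T : ℤ) := by
    have := hsplit
    rw [hB, hP] at this
    push_cast [← this]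
    ring
  rw [hDM5, hAcard]
  push_cast
  rw [Finset.sum_mul]
  congr 1
  refine Finset.sum_congr rfl (fun b hb => ?_)
  have hdu : 1 ≤ G.degree u := by
    have : 0 < (G.neighborFinset u).card := Finset.card_pos.mpr ⟨b, hb⟩
    rwa [G.card_neighborFinset_eq_degree] at this
  have hdb : 1 ≤ G.degree b := by
    have : u ∈ G.neighborFinset b := by
      rwa [mem_neighborFinset, adj_comm, ← mem_neighborFinset]
    have : 0 < (G.neighborFinset b).card := Finset.card_pos.mpr ⟨u, this⟩
    rwa [G.card_neighborFinset_eq_degree] at this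
  push_cast [Nat.cast_sub hdu, Nat.cast_sub hdb]
  ring
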